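/- arXiv:1609.00517 — 4 statements merged into one kernel-verified Lean document; each statement's English description precedes it below -/
import Mathlib

section
/- If a positive-valued double sequence a(m,n) indexed by positive integers is superadditive in each index separately (i.e., a(m1+m2,n) ≥ a(m1,n)+a(m2,n) and a(m,n1+n2) ≥ a(m,n1)+a(m,n2)), and if sup_n a(n,n)/n² exists (is finite), then lim_{n→∞} a(n,n)/n² exists and equals sup_n a(n,n)/n². -/
section aux

variable (a : ℕ+ × ℕ+ → ℝ)

private lemma fekete_mono1 (hpos : ∀ m n : ℕ+, 0 < a (m, n))
    (hsup1 : ∀ m₁ m₂ n : ℕ+, a (m₁, n) + a (m₂, n) ≤ a (m₁ + m₂, n)) :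
    ∀ m m' n : ℕ+, m ≤ m' → a (m, n) ≤ a (m', n) := by
  intro m m' n h
  rcases eq_or_lt_of_le h with rfl | h
  · exact le_rfl
  · have := hsup1 m (m' - m) n
    rw [PNat.add_sub_of_lt h] at this
    nlinarith [hpos (m' - m) n]

private lemma fekete_mono2 (hpos : ∀ m n : ℕ+, 0 < a (m, n))
    (hsup2 : ∀ m n₁ n₂ : ℕ+, a (m, n₁) + a (m, n₂) ≤ a (m, n₁ + n₂)) :
    ∀ m n n' : ℕ+, n ≤ n' → a (m, n) ≤ a (m, n') := by
  intro m n n' h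
  rcases eq_or_lt_of_le h with rfl | h
  · exact le_rfl
  · have := hsup2 m n (n' - n)
    rw [PNat.add_sub_of_lt h] at this
    nlinarith [hpos m (n' - n)]

private lemma fekete_mul1
    (hsup1 : ∀ m₁ m₂ n : ℕ+, a (m₁, n) + a (m₂, n) ≤ a (m₁ + m₂, n)) :
    ∀ q N n : ℕ+, (q : ℝ) * a (N, n) ≤ a (q * N, n) := by
  intro q
  induction q using PNat.recOn with
  | one => intro N n; simp
  | succ q ih =>
    intro N n
    have h1 := hsup1 (q * N) N n
    have h2 := ih N n
    have he : (q + 1) * N = q * N + N := by ring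
    rw [he]
    have hc : ((q + 1 : ℕ+) : ℝ) = (q : ℝ) + 1 := by push_cast; ring
    rw [hc]
    nlinarith

private lemma fekete_mul2
    (hsup2 : ∀ m n₁ n₂ : ℕ+, a (m, n₁) + a (m, n₂) ≤ a (m, n₁ + n₂)) :
    ∀ q N n : ℕ+, (q : ℝ) * a (N, n) ≤ a (N, q * n) := by
  intro q
  induction q using PNat.recOn with
  | one => intro N n; simp
  | succ q ih =>
    intro N n
    have h1 := hsup2 N (q * n) n
    have h2 := ih N n
    have he : (q + 1) * n = q * n + n := by ring
    rw [he]
    have hc : ((q + 1 : ℕ+) : ℝ) = (q : ℝ) + 1 := by push_cast; ring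
    rw [hc]
    nlinarith

end aux

private lemma pnat_cast_tendsto :
    Filter.Tendsto (fun n : ℕ+ => (n : ℝ)) Filter.atTop Filter.atTop := by
  apply Filter.tendsto_atTop_atTop.2
  intro b
  obtain ⟨k, hk⟩ := exists_nat_gt b
  refine ⟨⟨k + 1, Nat.succ_pos k⟩, fun n hn => ?_⟩
  have : ((k : ℕ) + 1 : ℕ) ≤ (n : ℕ) := hn
  have : ((k : ℝ) + 1) ≤ (n : ℝ) := by exact_mod_cast this
  linarith

/-- Two-variable Fekete lemma: a positive double sequence, superadditive in each
index separately, with bounded `a(n,n)/n²`, satisfies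
`lim a(n,n)/n² = sup a(n,n)/n²`. -/
theorem two_variable_fekete (a : ℕ+ × ℕ+ → ℝ)
    (hpos : ∀ m n : ℕ+, 0 < a (m, n))
    (hsup1 : ∀ m₁ m₂ n : ℕ+, a (m₁, n) + a (m₂, n) ≤ a (m₁ + m₂, n))
    (hsup2 : ∀ m n₁ n₂ : ℕ+, a (m, n₁) + a (m, n₂) ≤ a (m, n₁ + n₂))
    (hbdd : BddAbove (Set.range fun n : ℕ+ => a (n, n) / (n : ℝ) ^ 2)) :
    Filter.Tendsto (fun n : ℕ+ => a (n, n) / (n : ℝ) ^ 2) Filter.atTop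
      (nhds (⨆ n : ℕ+, a (n, n) / (n : ℝ) ^ 2)) := by
  set f : ℕ+ → ℝ := fun n : ℕ+ => a (n, n) / (n : ℝ) ^ 2 with hf
  rw [tendsto_order]
  constructor
  · -- main direction: for c < sup, eventually c < f n
    intro c hc
    obtain ⟨N, hN⟩ := exists_lt_of_lt_ciSup hc
    set s : ℝ := a (N, N) / (N : ℝ) ^ 2 with hs
    have hNpos : (0 : ℝ) < (N : ℝ) := by exact_mod_cast N.pos
    have hspos : 0 < s := div_pos (hpos N N) (by positivity)
    -- the auxiliary sequence g n = (1 - N/n)^2 * s tends to s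
    have hg : Filter.Tendsto (fun n : ℕ+ => (1 - (N : ℝ) / (n : ℝ)) ^ 2 * s)
        Filter.atTop (nhds s) := by
      have h0 : Filter.Tendsto (fun n : ℕ+ => (N : ℝ) / (n : ℝ)) Filter.atTop
          (nhds 0) := Filter.Tendsto.div_atTop tendsto_const_nhds pnat_cast_tendsto
      have h1 : Filter.Tendsto (fun n : ℕ+ => 1 - (N : ℝ) / (n : ℝ)) Filter.atTop
          (nhds 1) := by
        have := ((tendsto_const_nhds :
          Filter.Tendsto (fun _ : ℕ+ => (1:ℝ)) Filter.atTop (nhds 1)).sub h0)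
        simpa using this
      have := (h1.pow 2).mul_const s
      simpa using this
    have hev1 : ∀ᶠ n : ℕ+ in Filter.atTop, c < (1 - (N : ℝ) / (n : ℝ)) ^ 2 * s :=
      hg.eventually (eventually_gt_nhds hN)
    have hev2 : ∀ᶠ n : ℕ+ in Filter.atTop, (1 - (N : ℝ) / (n : ℝ)) ^ 2 * s ≤ f n := by
      filter_upwards [Filter.eventually_ge_atTop N] with n hn
      -- q = ⌊n/N⌋ ≥ 1
      have hNn : (N : ℕ) ≤ (n : ℕ) := hn
      have hqpos : 0 < (n : ℕ) / (N : ℕ) := Nat.div_pos hNn N.pos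
      set q : ℕ+ := ⟨(n : ℕ) / (N : ℕ), hqpos⟩ with hq
      have hqN_le : q * N ≤ n := by
        have : ((q * N : ℕ+) : ℕ) ≤ (n : ℕ) := by
          show (n : ℕ) / (N : ℕ) * (N : ℕ) ≤ (n : ℕ)
          exact Nat.div_mul_le_self _ _
        exact_mod_cast this
      have hlt : (n : ℕ) < ((n : ℕ) / (N : ℕ) + 1) * (N : ℕ) := by
        have h1 := Nat.div_add_mod (n : ℕ) (N : ℕ)
        have h2 := Nat.mod_lt (n : ℕ) N.pos
        calc (n : ℕ) = (N : ℕ) * ((n : ℕ) / (N : ℕ)) + (n : ℕ) % (N : ℕ) := h1.symm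
          _ < (N : ℕ) * ((n : ℕ) / (N : ℕ)) + (N : ℕ) := by omega
          _ = ((n : ℕ) / (N : ℕ) + 1) * (N : ℕ) := by ring
      have hltR : (n : ℝ) < ((q : ℝ) + 1) * (N : ℝ) := by exact_mod_cast hlt
      -- chain of inequalities
      have hnpos : (0 : ℝ) < (n : ℝ) := by exact_mod_cast n.pos
      have hqR : (0 : ℝ) < (q : ℝ) := by exact_mod_cast q.pos
      have step1 : (q : ℝ) * ((q : ℝ) * a (N, N)) ≤ a (n, n) := by
        have hA : (q : ℝ) * a (N, q * N) ≤ a (q * N, q * N) :=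
          fekete_mul1 a hsup1 q N (q * N)
        have hB : (q : ℝ) * a (N, N) ≤ a (N, q * N) :=
          fekete_mul2 a hsup2 q N N
        have hC : a (q * N, q * N) ≤ a (q * N, n) :=
          fekete_mono2 a hpos hsup2 _ _ _ hqN_le
        have hD : a (q * N, n) ≤ a (n, n) :=
          fekete_mono1 a hpos hsup1 _ _ _ hqN_le
        nlinarith
      -- (1 - N/n) ≤ q*N/n and both relevant quantities nonneg
      have hkey : (1 - (N : ℝ) / (n : ℝ)) ≤ (q : ℝ) * (N : ℝ) / (n : ℝ) := by
        rw [sub_le_iff_le_add, ← add_div, le_div_iff₀ hnpos, one_mul]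
        nlinarith
      have hnn : (0 : ℝ) ≤ 1 - (N : ℝ) / (n : ℝ) := by
        rw [sub_nonneg]
        exact div_le_one_of_le₀ (by exact_mod_cast hNn) hnpos.le
      have hsq : (1 - (N : ℝ) / (n : ℝ)) ^ 2 ≤ ((q : ℝ) * (N : ℝ) / (n : ℝ)) ^ 2 :=
        pow_le_pow_left₀ hnn hkey 2
      have : (1 - (N : ℝ) / (n : ℝ)) ^ 2 * s ≤ ((q : ℝ) * (N : ℝ) / (n : ℝ)) ^ 2 * s :=
        mul_le_mul_of_nonneg_right hsq hspos.le
      refine this.trans ?_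
      have hfn : f n = a (n, n) / (n : ℝ) ^ 2 := rfl
      have expand : ((q : ℝ) * (N : ℝ) / (n : ℝ)) ^ 2 * s
          = (q : ℝ) * ((q : ℝ) * a (N, N)) / (n : ℝ) ^ 2 := by
        rw [hs]
        field_simp
      rw [expand, hfn]
      exact div_le_div_of_nonneg_right step1 (by positivity)
    filter_upwards [hev1, hev2] with n h1 h2
    exact h1.trans_le h2
  · intro c hc
    filter_upwards with n
    exact lt_of_le_of_lt (le_ciSup hbdd n) hc
end

section
/- If a positive-valued double sequence a(m,n) is superadditive in each index, then for any k ≥ 1 and any n > k, writing n = p·k + q with 0 ≤ q < k by the division algorithm, one has a(n,n) ≥ p²·a(k,k) + p·a(k,q) + p·a(q,k) + a(q,q) (where terms with q = 0 are omitted). -/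
private lemma fekete_aux1 (a : ℕ+ × ℕ+ → ℝ)
    (hsup1 : ∀ m₁ m₂ n : ℕ+, a (m₁, n) + a (m₂, n) ≤ a (m₁ + m₂, n)) :
    ∀ (p m n : ℕ+), (p : ℝ) * a (m, n) ≤ a (p * m, n) := by
  intro p
  induction p using PNat.recOn with
  | one => intro m n; simp
  | succ p ih =>
    intro m n
    have h := hsup1 m (p * m) n
    have : ((p + 1 : ℕ+) : ℝ) = (p : ℝ) + 1 := by push_cast; ring
    rw [this]
    have hmul : (p + 1) * m = m + p * m := by ring
    rw [hmul]
    nlinarith [ih m n]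

private lemma fekete_aux2 (a : ℕ+ × ℕ+ → ℝ)
    (hsup2 : ∀ m n₁ n₂ : ℕ+, a (m, n₁) + a (m, n₂) ≤ a (m, n₁ + n₂)) :
    ∀ (p m n : ℕ+), (p : ℝ) * a (m, n) ≤ a (m, p * n) := by
  intro p
  induction p using PNat.recOn with
  | one => intro m n; simp
  | succ p ih =>
    intro m n
    have h := hsup2 m n (p * n)
    have : ((p + 1 : ℕ+) : ℝ) = (p : ℝ) + 1 := by push_cast; ring
    rw [this]
    have hmul : (p + 1) * n = n + p * n := by ring
    rw [hmul]
    nlinarith [ih m n]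

/-- Key inequality in the proof of the two-variable Fekete lemma: for `n = p·k + q`
with `0 ≤ q < k`, one has `a(n,n) ≥ p²·a(k,k) + p·a(k,q) + p·a(q,k) + a(q,q)`,
where the terms involving `q` are omitted when `q = 0`. -/
theorem fekete_key_inequality (a : ℕ+ × ℕ+ → ℝ)
    (hpos : ∀ m n : ℕ+, 0 < a (m, n))
    (hsup1 : ∀ m₁ m₂ n : ℕ+, a (m₁, n) + a (m₂, n) ≤ a (m₁ + m₂, n))
    (hsup2 : ∀ m n₁ n₂ : ℕ+, a (m, n₁) + a (m, n₂) ≤ a (m, n₁ + n₂))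
    (k n : ℕ+) (hkn : k < n) (p q : ℕ) (hq : q < k) (hdiv : (n : ℕ) = p * k + q) :
    if hq0 : 0 < q then
      (p : ℝ) ^ 2 * a (k, k) + p * a (k, ⟨q, hq0⟩) + p * a (⟨q, hq0⟩, k)
        + a (⟨q, hq0⟩, ⟨q, hq0⟩) ≤ a (n, n)
    else (p : ℝ) ^ 2 * a (k, k) ≤ a (n, n) := by
  have hkn' : (k : ℕ) < n := hkn
  have hp0 : 0 < p := by nlinarith [k.pos]
  set P : ℕ+ := ⟨p, hp0⟩ with hP
  by_cases hq0 : 0 < q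
  · rw [dif_pos hq0]
    set Q : ℕ+ := ⟨q, hq0⟩ with hQ
    have hn : n = P * k + Q := by
      apply PNat.coe_injective
      show (n : ℕ) = p * (k : ℕ) + q
      exact hdiv
    rw [hn]
    have h1 := hsup1 (P * k) Q (P * k + Q)
    -- a(Pk, n) ≥ P * a(k, n)
    have h2 : (P : ℝ) * a (k, P * k + Q) ≤ a (P * k, P * k + Q) :=
      fekete_aux1 a hsup1 P k _
    have h3 : a (k, P * k) + a (k, Q) ≤ a (k, P * k + Q) := hsup2 k (P * k) Q
    have h4 : (P : ℝ) * a (k, k) ≤ a (k, P * k) := fekete_aux2 a hsup2 P k k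
    have h5 : a (Q, P * k) + a (Q, Q) ≤ a (Q, P * k + Q) := hsup2 Q (P * k) Q
    have h6 : (P : ℝ) * a (Q, k) ≤ a (Q, P * k) := fekete_aux2 a hsup2 P Q k
    have hPcast : (P : ℝ) = (p : ℝ) := by rw [hP]; simp
    have hp1 : (1 : ℝ) ≤ (p : ℝ) := by exact_mod_cast hp0
    rw [hPcast] at h2 h4 h6
    nlinarith [hpos k Q, hpos Q k, hpos Q Q, hpos k k]
  · rw [dif_neg hq0]
    have hq0' : q = 0 := by omega
    have hn : n = P * k := by
      apply PNat.coe_injective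
      show (n : ℕ) = p * (k : ℕ)
      omega
    rw [hn]
    have h2 : (P : ℝ) * a (k, P * k) ≤ a (P * k, P * k) := fekete_aux1 a hsup1 P k _
    have h4 : (P : ℝ) * a (k, k) ≤ a (k, P * k) := fekete_aux2 a hsup2 P k k
    have hPcast : (P : ℝ) = (p : ℝ) := by rw [hP]; simp
    have hp1 : (1 : ℝ) ≤ (p : ℝ) := by exact_mod_cast hp0
    rw [hPcast] at h2 h4
    nlinarith [hpos k k]
end

section
/- If a double sequence D(m,n) of positive reals is supermultiplicative in each index (D(m1+m2,n) ≥ D(m1,n)·D(m2,n) and D(m,n1+n2) ≥ D(m,n1)·D(m,n2)) and D(n,n)^{1/n²} is bounded above, then lim_{n→∞} D(n,n)^{1/n²} exists and equals sup_n D(n,n)^{1/n²}. -/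
set_option maxHeartbeats 1000000 in
/-- Supermultiplicative version of the two-variable Fekete lemma: if a positive
double sequence is supermultiplicative in each index and `D(n,n)^(1/n²)` is
bounded above, then `lim D(n,n)^(1/n²)` exists and equals `sup D(n,n)^(1/n²)`. -/
theorem two_variable_fekete_supermultiplicative (D : ℕ+ × ℕ+ → ℝ)
    (hpos : ∀ m n : ℕ+, 0 < D (m, n))
    (hsup1 : ∀ m₁ m₂ n : ℕ+, D (m₁, n) * D (m₂, n) ≤ D (m₁ + m₂, n))
    (hsup2 : ∀ m n₁ n₂ : ℕ+, D (m, n₁) * D (m, n₂) ≤ D (m, n₁ + n₂))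
    (hbdd : BddAbove (Set.range fun n : ℕ+ => D (n, n) ^ (((n : ℝ) ^ 2)⁻¹))) :
    Filter.Tendsto (fun n : ℕ+ => D (n, n) ^ (((n : ℝ) ^ 2)⁻¹)) Filter.atTop
      (nhds (⨆ n : ℕ+, D (n, n) ^ (((n : ℝ) ^ 2)⁻¹))) := by
  set g : ℕ+ → ℝ := fun n => Real.log (D (n, n)) * (((n : ℝ)) ^ 2)⁻¹ with hgdef
  have hfg : ∀ n : ℕ+, D (n, n) ^ (((n : ℝ) ^ 2)⁻¹) = Real.exp (g n) := by
    intro n; rw [Real.rpow_def_of_pos (hpos n n)]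
  have hgbdd : BddAbove (Set.range g) := by
    obtain ⟨c, hc⟩ := hbdd
    have h1' : D (1, 1) ^ ((((1:ℕ+) : ℝ)) ^ 2)⁻¹ ≤ c := hc ⟨1, rfl⟩
    have hcpos : 0 < c := lt_of_lt_of_le (by rw [hfg 1]; exact Real.exp_pos _) h1'
    refine ⟨Real.log c, ?_⟩
    rintro x ⟨n, rfl⟩
    have h1 : Real.exp (g n) ≤ c := by rw [← hfg n]; exact hc ⟨n, rfl⟩
    rw [← Real.exp_le_exp, Real.exp_log hcpos]
    exact h1
  have hsup_eq : (⨆ n : ℕ+, D (n, n) ^ (((n : ℝ) ^ 2)⁻¹)) = Real.exp (⨆ n, g n) := by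
    rw [Real.exp_monotone.map_ciSup_of_continuousAt Real.continuous_exp.continuousAt hgbdd]
    simp only [hfg]
  have key1 : ∀ (p nn : ℕ+) (k : ℕ), D (p, nn) ^ (k + 1) ≤ D (k.succPNat * p, nn) := by
    intro p nn k
    induction k with
    | zero =>
      have heq : (0:ℕ).succPNat * p = p := by
        apply PNat.coe_injective; simp [PNat.mul_coe]
      rw [heq, pow_one]
    | succ k ih =>
      have heq : (k+1).succPNat * p = k.succPNat * p + p := by
        apply PNat.coe_injective; simp [PNat.mul_coe, PNat.add_coe]; ring
      rw [heq, pow_succ]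
      exact le_trans (mul_le_mul_of_nonneg_right ih (hpos p nn).le) (hsup1 _ _ _)
  have key2 : ∀ (p nn : ℕ+) (k : ℕ), D (p, nn) ^ (k + 1) ≤ D (p, k.succPNat * nn) := by
    intro p nn k
    induction k with
    | zero =>
      have heq : (0:ℕ).succPNat * nn = nn := by
        apply PNat.coe_injective; simp [PNat.mul_coe]
      rw [heq, pow_one]
    | succ k ih =>
      have heq : (k+1).succPNat * nn = k.succPNat * nn + nn := by
        apply PNat.coe_injective; simp [PNat.mul_coe, PNat.add_coe]; ring
      rw [heq, pow_succ]
      exact le_trans (mul_le_mul_of_nonneg_right ih (hpos p nn).le) (hsup2 _ _ _)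
  have key1p : ∀ (p nn k : ℕ+), D (p, nn) ^ (k : ℕ) ≤ D (k * p, nn) := by
    rintro p nn ⟨k, hk⟩
    cases k with
    | zero => exact absurd hk (lt_irrefl 0)
    | succ k => exact key1 p nn k
  have key2p : ∀ (p nn k : ℕ+), D (p, nn) ^ (k : ℕ) ≤ D (p, k * nn) := by
    rintro p nn ⟨k, hk⟩
    cases k with
    | zero => exact absurd hk (lt_irrefl 0)
    | succ k => exact key2 p nn k
  have hmain : Filter.Tendsto g Filter.atTop (nhds (⨆ n, g n)) := by
    apply tendsto_order.2
    constructor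
    · intro b hb
      obtain ⟨m, hm⟩ := exists_lt_of_lt_ciSup hb
      set a : ℝ := Real.log (D (m, m)) with ha
      set t : ℕ → ℝ := fun r =>
        if h : 0 < r then
          |Real.log (D (m, ⟨r, h⟩))| + |Real.log (D (⟨r, h⟩, m))| +
            |Real.log (D (⟨r, h⟩, ⟨r, h⟩))|
        else 0 with ht
      have htnn : ∀ r, 0 ≤ t r := by
        intro r; rw [ht]; dsimp only
        split
        · positivity
        · exact le_refl 0
      set C : ℝ := -(∑ r ∈ Finset.range (m : ℕ), t r) with hCdef
      have hC0 : C ≤ 0 := by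
        rw [hCdef]
        simp only [neg_nonpos]
        exact Finset.sum_nonneg fun i _ => htnn i
      have hCr : ∀ (r : ℕ) (hr : 0 < r), r < (m : ℕ) →
          C ≤ Real.log (D (m, ⟨r, hr⟩)) + Real.log (D (⟨r, hr⟩, m)) ∧
          C ≤ Real.log (D (⟨r, hr⟩, ⟨r, hr⟩)) := by
        intro r hr hrm
        have hsum : t r ≤ ∑ i ∈ Finset.range (m : ℕ), t i :=
          Finset.single_le_sum (fun i _ => htnn i) (Finset.mem_range.2 hrm)
        have htr : t r = |Real.log (D (m, ⟨r, hr⟩))| + |Real.log (D (⟨r, hr⟩, m))| +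
            |Real.log (D (⟨r, hr⟩, ⟨r, hr⟩))| := by rw [ht]; simp [hr]
        constructor
        · have h1 := neg_abs_le (Real.log (D (m, ⟨r, hr⟩)))
          have h2 := neg_abs_le (Real.log (D (⟨r, hr⟩, m)))
          have h3 := abs_nonneg (Real.log (D (⟨r, hr⟩, ⟨r, hr⟩)))
          rw [hCdef]; linarith [hsum, htr.ge, htr.le]
        · have h1 := abs_nonneg (Real.log (D (m, ⟨r, hr⟩)))
          have h2 := abs_nonneg (Real.log (D (⟨r, hr⟩, m)))
          have h3 := neg_abs_le (Real.log (D (⟨r, hr⟩, ⟨r, hr⟩)))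
          rw [hCdef]; linarith [hsum, htr.ge, htr.le]
      set K : ℝ := 3 * (|a| + |C|) with hKdef
      have hK0 : 0 ≤ K := by positivity
      -- core log inequality
      have core : ∀ (n qp : ℕ+) (r : ℕ), (qp : ℕ) * (m : ℕ) + r = (n : ℕ) →
          r < (m : ℕ) →
          ((qp : ℕ) : ℝ) ^ 2 * a + (((qp : ℕ) : ℝ) + 1) * C ≤ Real.log (D (n, n)) := by
        intro n qp r hdm hrlt
        rcases Nat.eq_zero_or_pos r with hr0 | hrpos
        · have hnq : qp * m = n := by
            apply PNat.coe_injective; rw [PNat.mul_coe]; omega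
          have hchain : D (m, m) ^ ((qp : ℕ) * (qp : ℕ)) ≤ D (n, n) := by
            calc D (m, m) ^ ((qp : ℕ) * (qp : ℕ)) = (D (m, m) ^ (qp : ℕ)) ^ (qp : ℕ) := by
                  rw [← pow_mul]
              _ ≤ (D (m, qp * m)) ^ (qp : ℕ) :=
                  pow_le_pow_left₀ (pow_nonneg (hpos m m).le _) (key2p m m qp) _
              _ = (D (m, n)) ^ (qp : ℕ) := by rw [hnq]
              _ ≤ D (qp * m, n) := key1p m n qp
              _ = D (n, n) := by rw [hnq]
          have hl := Real.log_le_log (pow_pos (hpos m m) _) hchain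
          rw [Real.log_pow] at hl
          have hcc : (((qp : ℕ) : ℝ) + 1) * C ≤ 0 :=
            mul_nonpos_of_nonneg_of_nonpos (by positivity) hC0
          push_cast at hl
          nlinarith [hl, hcc]
        · have hnqr : qp * m + ⟨r, hrpos⟩ = n := by
            apply PNat.coe_injective; change (qp : ℕ) * (m : ℕ) + r = (n : ℕ); omega
          set rp : ℕ+ := ⟨r, hrpos⟩ with hrpdef
          obtain ⟨hc1, hc2⟩ := hCr r hrpos hrlt
          have e1 : D (m, m) ^ (qp : ℕ) * D (m, rp) ≤ D (m, n) := by
            calc D (m, m) ^ (qp : ℕ) * D (m, rp) ≤ D (m, qp * m) * D (m, rp) :=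
                  mul_le_mul_of_nonneg_right (key2p m m qp) (hpos m rp).le
              _ ≤ D (m, qp * m + rp) := hsup2 _ _ _
              _ = D (m, n) := by rw [hnqr]
          have e2 : D (rp, m) ^ (qp : ℕ) * D (rp, rp) ≤ D (rp, n) := by
            calc D (rp, m) ^ (qp : ℕ) * D (rp, rp) ≤ D (rp, qp * m) * D (rp, rp) :=
                  mul_le_mul_of_nonneg_right (key2p rp m qp) (hpos rp rp).le
              _ ≤ D (rp, qp * m + rp) := hsup2 _ _ _
              _ = D (rp, n) := by rw [hnqr]
          have e3 : D (m, n) ^ (qp : ℕ) * D (rp, n) ≤ D (n, n) := by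
            calc D (m, n) ^ (qp : ℕ) * D (rp, n) ≤ D (qp * m, n) * D (rp, n) :=
                  mul_le_mul_of_nonneg_right (key1p m n qp) (hpos rp n).le
              _ ≤ D (qp * m + rp, n) := hsup1 _ _ _
              _ = D (n, n) := by rw [hnqr]
          have hx1 : (0:ℝ) < D (m, m) := hpos m m
          have hx2 : (0:ℝ) < D (m, rp) := hpos m rp
          have hx3 : (0:ℝ) < D (rp, m) := hpos rp m
          have hx4 : (0:ℝ) < D (rp, rp) := hpos rp rp
          have hA : (0:ℝ) < D (m, m) ^ (qp : ℕ) * D (m, rp) := by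
            exact mul_pos (pow_pos hx1 _) hx2
          have hB : (0:ℝ) < D (rp, m) ^ (qp : ℕ) * D (rp, rp) := by
            exact mul_pos (pow_pos hx3 _) hx4
          have hchain : (D (m, m) ^ (qp : ℕ) * D (m, rp)) ^ (qp : ℕ) *
              (D (rp, m) ^ (qp : ℕ) * D (rp, rp)) ≤ D (n, n) := by
            calc (D (m, m) ^ (qp : ℕ) * D (m, rp)) ^ (qp : ℕ) *
                (D (rp, m) ^ (qp : ℕ) * D (rp, rp))
                ≤ D (m, n) ^ (qp : ℕ) * (D (rp, m) ^ (qp : ℕ) * D (rp, rp)) :=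
                  mul_le_mul_of_nonneg_right
                    (pow_le_pow_left₀ hA.le e1 _) hB.le
              _ ≤ D (m, n) ^ (qp : ℕ) * D (rp, n) :=
                  mul_le_mul_of_nonneg_left e2 (pow_nonneg (hpos m n).le _)
              _ ≤ D (n, n) := e3
          have hl := Real.log_le_log (mul_pos (pow_pos hA _) hB) hchain
          have L : Real.log ((D (m, m) ^ (qp : ℕ) * D (m, rp)) ^ (qp : ℕ) *
              (D (rp, m) ^ (qp : ℕ) * D (rp, rp))) =
              ((qp : ℕ) : ℝ) ^ 2 * Real.log (D (m, m)) +
              ((qp : ℕ) : ℝ) * (Real.log (D (m, rp)) + Real.log (D (rp, m))) +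
              Real.log (D (rp, rp)) := by
            rw [Real.log_mul (pow_ne_zero _ hA.ne') hB.ne', Real.log_pow,
              Real.log_mul (pow_ne_zero _ hx1.ne') hx2.ne',
              Real.log_mul (pow_ne_zero _ hx3.ne') hx4.ne',
              Real.log_pow, Real.log_pow]
            ring
          rw [L] at hl
          have hqnn : (0 : ℝ) ≤ ((qp : ℕ) : ℝ) := Nat.cast_nonneg _
          have hcq := mul_le_mul_of_nonneg_left hc1 hqnn
          have hc1' : rp = (⟨r, hrpos⟩ : ℕ+) := hrpdef
          nlinarith [hl, hcq, hc2]
      -- lower bound for g n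
      have hlow : ∀ n : ℕ+, m ≤ n →
          a * ((m : ℝ) ^ 2)⁻¹ - K / ((m : ℝ) * (n : ℝ)) ≤ g n := by
        intro n hmn
        have hmnN : (m : ℕ) ≤ (n : ℕ) := hmn
        have hq0 : 0 < (n : ℕ) / (m : ℕ) := (Nat.one_le_div_iff m.pos).2 hmnN
        have hdm : ((n : ℕ) / (m : ℕ)) * (m : ℕ) + (n : ℕ) % (m : ℕ) = (n : ℕ) := by
          rw [Nat.mul_comm]; exact Nat.div_add_mod _ _
        have hrlt : (n : ℕ) % (m : ℕ) < (m : ℕ) := Nat.mod_lt _ m.pos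
        have hlog : (((n : ℕ) / (m : ℕ) : ℕ) : ℝ) ^ 2 * a +
            ((((n : ℕ) / (m : ℕ) : ℕ) : ℝ) + 1) * C ≤ Real.log (D (n, n)) :=
          core n ⟨(n : ℕ) / (m : ℕ), hq0⟩ ((n : ℕ) % (m : ℕ)) hdm hrlt
        set Q : ℕ := (n : ℕ) / (m : ℕ) with hQ
        have hmR : (0 : ℝ) < (m : ℝ) := by exact_mod_cast m.pos
        have hnR : (0 : ℝ) < (n : ℝ) := by exact_mod_cast n.pos
        have hq1R : (Q : ℝ) * (m : ℝ) ≤ (n : ℝ) := by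
          have h : Q * (m : ℕ) ≤ (n : ℕ) := by omega
          exact_mod_cast h
        have hq2R : (n : ℝ) < (Q : ℝ) * (m : ℝ) + (m : ℝ) := by
          have h : (n : ℕ) < Q * (m : ℕ) + (m : ℕ) := by omega
          exact_mod_cast h
        have hmnR : (m : ℝ) ≤ (n : ℝ) := by exact_mod_cast hmnN
        have hqR0 : (0 : ℝ) ≤ (Q : ℝ) := Nat.cast_nonneg Q
        have claim1 : (n : ℝ) ^ 2 * a - 3 * (n : ℝ) * (m : ℝ) * (|a| + |C|) ≤
            (m : ℝ) ^ 2 * ((Q : ℝ) ^ 2 * a + ((Q : ℝ) + 1) * C) := by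
          have h0 : 0 ≤ (n : ℝ) ^ 2 - (m : ℝ) ^ 2 * (Q : ℝ) ^ 2 := by
            nlinarith [mul_nonneg (sub_nonneg.2 hq1R)
              (by positivity : (0 : ℝ) ≤ (n : ℝ) + (Q : ℝ) * (m : ℝ))]
          have h1 : (n : ℝ) ^ 2 - (m : ℝ) ^ 2 * (Q : ℝ) ^ 2 ≤ 2 * (n : ℝ) * (m : ℝ) := by
            nlinarith [mul_le_mul (by linarith : (n : ℝ) - (Q : ℝ) * (m : ℝ) ≤ (m : ℝ))
              (by linarith : (n : ℝ) + (Q : ℝ) * (m : ℝ) ≤ 2 * (n : ℝ))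
              (by positivity : (0 : ℝ) ≤ (n : ℝ) + (Q : ℝ) * (m : ℝ)) hmR.le]
          have h2 : ((n : ℝ) ^ 2 - (m : ℝ) ^ 2 * (Q : ℝ) ^ 2) * a ≤
              2 * (n : ℝ) * (m : ℝ) * |a| :=
            le_trans (mul_le_mul_of_nonneg_left (le_abs_self a) h0)
              (mul_le_mul_of_nonneg_right h1 (abs_nonneg a))
          have h3 : ((Q : ℝ) + 1) * (m : ℝ) ^ 2 ≤ 2 * (n : ℝ) * (m : ℝ) := by
            nlinarith [hq1R, hmnR, hmR]
          have h4 : -(2 * (n : ℝ) * (m : ℝ) * |C|) ≤ (m : ℝ) ^ 2 * (((Q : ℝ) + 1) * C) := by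
            have h5 : 2 * (n : ℝ) * (m : ℝ) * C ≤ ((Q : ℝ) + 1) * (m : ℝ) ^ 2 * C :=
              mul_le_mul_of_nonpos_right h3 hC0
            have h6 := mul_le_mul_of_nonneg_left (neg_abs_le C)
              (by positivity : (0 : ℝ) ≤ 2 * (n : ℝ) * (m : ℝ))
            nlinarith [h5, h6]
          have h7 : (0 : ℝ) ≤ (n : ℝ) * (m : ℝ) * (|a| + |C|) := by positivity
          nlinarith [h2, h4, h7]
        have claim2 : a * ((m : ℝ) ^ 2)⁻¹ - K / ((m : ℝ) * (n : ℝ)) ≤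
            ((Q : ℝ) ^ 2 * a + ((Q : ℝ) + 1) * C) * (((n : ℝ)) ^ 2)⁻¹ := by
          have e : a * ((m : ℝ) ^ 2)⁻¹ - K / ((m : ℝ) * (n : ℝ)) =
              ((n : ℝ) ^ 2 * a - 3 * (n : ℝ) * (m : ℝ) * (|a| + |C|)) / ((m : ℝ) ^ 2) *
                (((n : ℝ)) ^ 2)⁻¹ := by
            rw [hKdef]; field_simp
          rw [e]
          apply mul_le_mul_of_nonneg_right _ (by positivity)
          rw [div_le_iff₀ (by positivity : (0 : ℝ) < (m : ℝ) ^ 2)]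
          linarith [claim1]
        show a * ((m : ℝ) ^ 2)⁻¹ - K / ((m : ℝ) * (n : ℝ)) ≤
          Real.log (D (n, n)) * (((n : ℝ)) ^ 2)⁻¹
        calc a * ((m : ℝ) ^ 2)⁻¹ - K / ((m : ℝ) * (n : ℝ))
            ≤ ((Q : ℝ) ^ 2 * a + ((Q : ℝ) + 1) * C) * (((n : ℝ)) ^ 2)⁻¹ := claim2
          _ ≤ Real.log (D (n, n)) * (((n : ℝ)) ^ 2)⁻¹ :=
              mul_le_mul_of_nonneg_right hlog (by positivity)
      -- conclude
      have hgm : g m = a * ((m : ℝ) ^ 2)⁻¹ := rfl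
      have hδ0 : 0 < g m - b := by linarith
      have hmR : (0 : ℝ) < (m : ℝ) := by exact_mod_cast m.pos
      obtain ⟨N, hN⟩ := exists_nat_gt (K / ((m : ℝ) * (g m - b)))
      refine Filter.eventually_atTop.2 ⟨max m ⟨N + 1, N.succ_pos⟩, fun n hn => ?_⟩
      have hmn : m ≤ n := le_trans (le_max_left _ _) hn
      have hnN : (N : ℝ) + 1 ≤ (n : ℝ) := by
        have h1 : ((⟨N + 1, N.succ_pos⟩ : ℕ+) : ℕ) ≤ (n : ℕ) :=
          le_trans (le_max_right m ⟨N + 1, N.succ_pos⟩) hn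
        exact_mod_cast h1
      have hnR : (0 : ℝ) < (n : ℝ) := by exact_mod_cast n.pos
      have hKn : K / ((m : ℝ) * (n : ℝ)) < g m - b := by
        rw [div_lt_iff₀ (by positivity)]
        have h2 : K / ((m : ℝ) * (g m - b)) < (n : ℝ) := lt_of_lt_of_le (by linarith) hnN
        rw [div_lt_iff₀ (by positivity)] at h2
        nlinarith [h2, hδ0, hmR, hnR]
      have hln := hlow n hmn
      rw [← hgm] at hln
      linarith
    · intro b hb
      exact Filter.Eventually.of_forall fun n =>
        lt_of_le_of_lt (le_ciSup hgbdd n) hb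
  rw [hsup_eq]
  have hfun : (fun n : ℕ+ => D (n, n) ^ (((n : ℝ) ^ 2)⁻¹)) = fun n => Real.exp (g n) :=
    funext hfg
  rw [hfun]
  exact (Real.continuous_exp.tendsto _).comp hmain
end

section
/- The number of knot (2,n)-mosaics is D_{2,n} = 2^{n−1}: equivalently, the number of 2×n arrays of the 11 mosaic tiles that are suitably connected with no connection point on the boundary equals 2^{n−1}. -/
/-- The 11 mosaic tiles: the blank tile, four arcs, two straight lines,
two double arcs and two crossings. -/
inductive Tile
  | blank | arcLT | arcTR | arcRB | arcBL | lineLR | lineTB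
  | doubleArc1 | doubleArc2 | cross1 | cross2
  deriving DecidableEq

instance instFintypeTile : Fintype Tile :=
  ⟨{Tile.blank, Tile.arcLT, Tile.arcTR, Tile.arcRB, Tile.arcBL, Tile.lineLR, Tile.lineTB,
    Tile.doubleArc1, Tile.doubleArc2, Tile.cross1, Tile.cross2}, fun x => by cases x <;> simp⟩

namespace Tile

/-- Whether a tile has a connection point on its left edge. -/
def cpL : Tile → Bool
  | blank => false | arcLT => true | arcTR => false | arcRB => false
  | arcBL => true | lineLR => true | lineTB => false
  | doubleArc1 => true | doubleArc2 => true | cross1 => true | cross2 => true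

/-- Whether a tile has a connection point on its right edge. -/
def cpR : Tile → Bool
  | blank => false | arcLT => false | arcTR => true | arcRB => true
  | arcBL => false | lineLR => true | lineTB => false
  | doubleArc1 => true | doubleArc2 => true | cross1 => true | cross2 => true

/-- Whether a tile has a connection point on its top edge. -/
def cpT : Tile → Bool
  | blank => false | arcLT => true | arcTR => true | arcRB => false
  | arcBL => false | lineLR => false | lineTB => true
  | doubleArc1 => true | doubleArc2 => true | cross1 => true | cross2 => true

/-- Whether a tile has a connection point on its bottom edge. -/
def cpB : Tile → Bool
  | blank => false | arcLT => false | arcTR => false | arcRB => true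
  | arcBL => true | lineLR => false | lineTB => true
  | doubleArc1 => true | doubleArc2 => true | cross1 => true | cross2 => true

end Tile

/-- A `2 × n` array of mosaic tiles is a knot `(2,n)`-mosaic if it is suitably
connected (adjacent tiles agree on connection points along their common edge)
and has no connection point on the boundary. -/
def IsKnotMosaic (n : ℕ) (M : Fin 2 → Fin n → Tile) : Prop :=
  (∀ i : Fin 2, ∀ j : Fin n, (j : ℕ) = 0 → (M i j).cpL = false) ∧
  (∀ i : Fin 2, ∀ j : Fin n, (j : ℕ) = n - 1 → (M i j).cpR = false) ∧
  (∀ j : Fin n, (M 0 j).cpT = false) ∧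
  (∀ j : Fin n, (M 1 j).cpB = false) ∧
  (∀ i : Fin 2, ∀ j j' : Fin n, (j' : ℕ) = (j : ℕ) + 1 → (M i j).cpR = (M i j').cpL) ∧
  (∀ j : Fin n, (M 0 j).cpB = (M 1 j).cpT)

instance (n : ℕ) : DecidablePred (IsKnotMosaic n) := fun M => by
  unfold IsKnotMosaic; infer_instance

namespace KnotAux

/-- Top-row tile with given left/right connection bits. -/
def tileTop : Bool → Bool → Tile
  | false, false => .blank
  | false, true  => .arcRB
  | true,  false => .arcBL
  | true,  true  => .lineLR

/-- Bottom-row tile with given left/right connection bits. -/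
def tileBot : Bool → Bool → Tile
  | false, false => .blank
  | false, true  => .arcTR
  | true,  false => .arcLT
  | true,  true  => .lineLR

lemma tileTop_cpL (a b : Bool) : (tileTop a b).cpL = a := by cases a <;> cases b <;> rfl
lemma tileTop_cpR (a b : Bool) : (tileTop a b).cpR = b := by cases a <;> cases b <;> rfl
lemma tileTop_cpT (a b : Bool) : (tileTop a b).cpT = false := by cases a <;> cases b <;> rfl
lemma tileTop_cpB (a b : Bool) : (tileTop a b).cpB = (a != b) := by cases a <;> cases b <;> rfl
lemma tileBot_cpL (a b : Bool) : (tileBot a b).cpL = a := by cases a <;> cases b <;> rfl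
lemma tileBot_cpR (a b : Bool) : (tileBot a b).cpR = b := by cases a <;> cases b <;> rfl
lemma tileBot_cpB (a b : Bool) : (tileBot a b).cpB = false := by cases a <;> cases b <;> rfl
lemma tileBot_cpT (a b : Bool) : (tileBot a b).cpT = (a != b) := by cases a <;> cases b <;> rfl

lemma top_det : ∀ t : Tile, t.cpT = false → t = tileTop t.cpL t.cpR := by decide
lemma bot_det : ∀ t : Tile, t.cpB = false → t = tileBot t.cpL t.cpR := by decide
lemma cpB_of_top : ∀ t : Tile, t.cpT = false → t.cpB = (t.cpL != t.cpR) := by decide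
lemma cpT_of_bot : ∀ t : Tile, t.cpB = false → t.cpT = (t.cpL != t.cpR) := by decide

variable {n : ℕ}

/-- The connection bit on the right edge of column `j`. -/
def curBit (g : Fin (n - 1) → Bool) (j : Fin n) : Bool :=
  if h : (j : ℕ) < n - 1 then g ⟨j, h⟩ else false

/-- The connection bit on the left edge of column `j`. -/
def prevBit (g : Fin (n - 1) → Bool) (j : Fin n) : Bool :=
  if h : 0 < (j : ℕ) then g ⟨(j : ℕ) - 1, Nat.sub_lt_sub_right h j.isLt⟩ else false

/-- The mosaic determined by the interior edge bits `g`. -/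
def mosaicOf (g : Fin (n - 1) → Bool) : Fin 2 → Fin n → Tile := fun i j =>
  if i = 0 then tileTop (prevBit g j) (curBit g j) else tileBot (prevBit g j) (curBit g j)

lemma mosaicOf_isKnot (g : Fin (n - 1) → Bool) : IsKnotMosaic n (mosaicOf g) := by
  refine ⟨?_, ?_, ?_, ?_, ?_, ?_⟩
  · intro i j hj
    have hp : prevBit g j = false := by simp [prevBit, hj]
    by_cases hi : i = 0 <;>
      simp [mosaicOf, hi, tileTop_cpL, tileBot_cpL, hp]
  · intro i j hj
    have hc : curBit g j = false := by simp [curBit, hj]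
    by_cases hi : i = 0 <;>
      simp [mosaicOf, hi, tileTop_cpR, tileBot_cpR, hc]
  · intro j; simp [mosaicOf, tileTop_cpT]
  · intro j
    have h1 : (1 : Fin 2) ≠ 0 := by decide
    simp [mosaicOf, h1, tileBot_cpB]
  · intro i j j' hj
    have hc : curBit g j = prevBit g j' := by
      have hjlt : (j : ℕ) < n - 1 := by have := j'.isLt; omega
      have h0 : 0 < (j' : ℕ) := by omega
      simp only [curBit, prevBit, dif_pos hjlt, dif_pos h0]
      congr 1
      apply Fin.ext
      show (j : ℕ) = (j' : ℕ) - 1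
      omega
    by_cases hi : i = 0 <;>
      simp [mosaicOf, hi, tileTop_cpR, tileBot_cpR, tileTop_cpL, tileBot_cpL, hc]
  · intro j
    have h1 : (1 : Fin 2) ≠ 0 := by decide
    simp [mosaicOf, h1, tileTop_cpB, tileBot_cpT]

/-- In a knot mosaic, the two rows have the same left/right connection bits. -/
lemma cols_eq (M : Fin 2 → Fin n → Tile) (hM : IsKnotMosaic n M) :
    ∀ j : Fin n, (M 0 j).cpL = (M 1 j).cpL ∧ (M 0 j).cpR = (M 1 j).cpR := by
  obtain ⟨hL, hR, hT, hB, hH, hV⟩ := hM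
  have key : ∀ k : ℕ, ∀ j : Fin n, (j : ℕ) = k →
      (M 0 j).cpL = (M 1 j).cpL ∧ (M 0 j).cpR = (M 1 j).cpR := by
    intro k
    induction k with
    | zero =>
      intro j hj
      have hLeq : (M 0 j).cpL = (M 1 j).cpL := by rw [hL 0 j hj, hL 1 j hj]
      refine ⟨hLeq, ?_⟩
      have h0 := cpB_of_top _ (hT j)
      have h1 := cpT_of_bot _ (hB j)
      have hv := hV j
      rw [h0, h1, hLeq] at hv
      revert hv
      cases (M 1 j).cpL <;> cases (M 0 j).cpR <;> cases (M 1 j).cpR <;> decide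
    | succ k ih =>
      intro j hj
      have hklt : k < n := by have := j.isLt; omega
      set j₀ : Fin n := ⟨k, hklt⟩ with hj₀
      have hstep : (j : ℕ) = (j₀ : ℕ) + 1 := by simp [hj₀, hj]
      obtain ⟨_, ihR⟩ := ih j₀ rfl
      have hLeq : (M 0 j).cpL = (M 1 j).cpL := by
        rw [← hH 0 j₀ j hstep, ← hH 1 j₀ j hstep, ihR]
      refine ⟨hLeq, ?_⟩
      have h0 := cpB_of_top _ (hT j)
      have h1 := cpT_of_bot _ (hB j)
      have hv := hV j
      rw [h0, h1, hLeq] at hv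
      revert hv
      cases (M 1 j).cpL <;> cases (M 0 j).cpR <;> cases (M 1 j).cpR <;> decide
  exact fun j => key (j : ℕ) j rfl

/-- Decode the interior edge bits from a mosaic. -/
def dec (M : Fin 2 → Fin n → Tile) (k : Fin (n - 1)) : Bool :=
  (M 0 ⟨k, lt_of_lt_of_le k.isLt (Nat.sub_le n 1)⟩).cpR

lemma curBit_dec (hn : 1 ≤ n) (M : Fin 2 → Fin n → Tile) (hM : IsKnotMosaic n M)
    (j : Fin n) : curBit (dec M) j = (M 0 j).cpR := by
  unfold curBit
  split
  · next h =>
    unfold dec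
    congr 1
  · next h =>
    rw [hM.2.1 0 j (by have := j.isLt; omega)]

lemma prevBit_dec (hn : 1 ≤ n) (M : Fin 2 → Fin n → Tile) (hM : IsKnotMosaic n M)
    (j : Fin n) : prevBit (dec M) j = (M 0 j).cpL := by
  unfold prevBit
  split
  · next h =>
    have := hM.2.2.2.2.1 0 ⟨(j : ℕ) - 1, by omega⟩ j
      (show (j : ℕ) = (j : ℕ) - 1 + 1 by omega)
    simpa [dec] using this
  · next h =>
    rw [hM.1 0 j (by omega)]

/-- The bijection between interior edge bits and knot mosaics. -/
def mosaicEquiv (hn : 1 ≤ n) :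
    (Fin (n - 1) → Bool) ≃ {M : Fin 2 → Fin n → Tile // IsKnotMosaic n M} where
  toFun g := ⟨mosaicOf g, mosaicOf_isKnot g⟩
  invFun M := dec M.1
  left_inv g := by
    funext k
    have hk : (k : ℕ) < n - 1 := k.isLt
    simp [dec, mosaicOf, curBit, hk, tileTop_cpR]
  right_inv := by
    rintro ⟨M, hM⟩
    ext i j
    obtain ⟨hLeq, hReq⟩ := cols_eq M hM j
    have hcur := curBit_dec hn M hM j
    have hprev := prevBit_dec hn M hM j
    fin_cases i
    · show mosaicOf (dec M) 0 j = M 0 j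
      rw [show mosaicOf (dec M) 0 j = tileTop (prevBit (dec M) j) (curBit (dec M) j) from rfl,
        hcur, hprev]
      exact (top_det _ (hM.2.2.1 j)).symm
    · show mosaicOf (dec M) 1 j = M 1 j
      have h1 : mosaicOf (dec M) 1 j = tileBot (prevBit (dec M) j) (curBit (dec M) j) := rfl
      rw [h1, hcur, hprev, hLeq, hReq]
      exact (bot_det _ (hM.2.2.2.1 j)).symm
  
end KnotAux

/-- The number of knot `(2,n)`-mosaics is `2^(n-1)`. -/
theorem knot_two_row_mosaics (n : ℕ) (hn : 1 ≤ n) :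
    Fintype.card {M : Fin 2 → Fin n → Tile // IsKnotMosaic n M} = 2 ^ (n - 1) := by
  rw [← Fintype.card_congr (KnotAux.mosaicEquiv hn)]
  simp [Fintype.card_fun]
end
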